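/- Value-gradient resolvent identity: for every θ and every state s, the gradient of the value function satisfies the linear recursion ∇_θ v_θ(s) = Σ_{a∈A} [∇_θ π_θ(a|s)] q_θ(s,a) + Σ_{s'∈S} P_{θ,γ}(s,s') ∇_θ v_θ(s'); consequently, writing V_θ for the |S|×d matrix whose row indexed by s is ∇_θ v_θ(s)ᵀ and G for the |S|×d matrix whose row indexed by s is g(s)ᵀ with g(s) = Σ_{a∈A} [∇_θ π_θ(a|s)] q_θ(s,a), one has V_θ = (I − P_{θ,γ})⁻¹ G. -/

import Mathlib

open Matrix

theorem aux_det_diff {n : Type*} [Fintype n] [DecidableEq n] {E : Type*} [NormedAddCommGroup E]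
    [NormedSpace ℝ E] (M : E → Matrix n n ℝ) (θ : E)
    (h : ∀ i j, DifferentiableAt ℝ (fun x => M x i j) θ) :
    DifferentiableAt ℝ (fun x => (M x).det) θ := by
  simp only [Matrix.det_apply']
  apply DifferentiableAt.fun_sum
  intro σ _
  apply DifferentiableAt.const_mul
  exact (HasFDerivAt.finset_prod (fun i (_ : i ∈ Finset.univ) =>
    (h (σ i) i).hasFDerivAt)).differentiableAt

/-- Value-gradient resolvent identity: for every `θ` and state `s`,
`∇_θ v_θ(s) = ∑_a [∇_θ π_θ(a|s)] q_θ(s,a) + ∑_{s'} P_{θ,γ}(s,s') ∇_θ v_θ(s')`,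
and consequently `V_θ = (I − P_{θ,γ})⁻¹ G` row-wise. -/
theorem value_gradient_resolvent_identity
    {S A : Type*} [Fintype S] [Nonempty S] [DecidableEq S] [Fintype A] [Nonempty A]
    (d : ℕ)
    (P : S → A → S → ℝ)
    (hP0 : ∀ s a s', 0 ≤ P s a s') (hP1 : ∀ s a, ∑ s', P s a s' = 1)
    (rbar : S → A → ℝ)
    (γ : ℝ) (hγ0 : 0 < γ) (hγ1 : γ < 1)
    (π : EuclideanSpace ℝ (Fin d) → S → A → ℝ)
    (hπ0 : ∀ θ s a, 0 ≤ π θ s a)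
    (hπ1 : ∀ θ s, ∑ a, π θ s a = 1)
    (hπC1 : ∀ s a, ContDiff ℝ 1 (fun θ => π θ s a))
    (Pγ : EuclideanSpace ℝ (Fin d) → Matrix S S ℝ)
    (hPγ : ∀ θ s s', Pγ θ s s' = γ * ∑ a, π θ s a * P s a s')
    (v : EuclideanSpace ℝ (Fin d) → S → ℝ)
    (hv : ∀ θ, v θ = (1 - Pγ θ)⁻¹ *ᵥ (fun s => ∑ a, π θ s a * rbar s a))
    (q : EuclideanSpace ℝ (Fin d) → S → A → ℝ)
    (hq : ∀ θ s a, q θ s a = rbar s a + γ * ∑ s', P s a s' * v θ s')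
    (θ : EuclideanSpace ℝ (Fin d)) :
    (∀ s, fderiv ℝ (fun θ' => v θ' s) θ
        = ∑ a, q θ s a • fderiv ℝ (fun θ' => π θ' s a) θ
          + ∑ s', Pγ θ s s' • fderiv ℝ (fun θ' => v θ' s') θ)
    ∧ ∀ s, fderiv ℝ (fun θ' => v θ' s) θ
        = ∑ s', (1 - Pγ θ)⁻¹ s s' •
            (∑ a, q θ s' a • fderiv ℝ (fun θ' => π θ' s' a) θ) := by
  classical
  have hexp : ∀ (M : Matrix S S ℝ) (y : S → ℝ) (s : S),
      ∑ x, (1 - M) s x * y x = y s - ∑ x, M s x * y x := by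
    intro M y s
    simp [Matrix.sub_apply, Matrix.one_apply, sub_mul, Finset.sum_sub_distrib,
      ite_mul, Finset.sum_ite_eq]
  have hπdiff : ∀ (θ' : EuclideanSpace ℝ (Fin d)) s a,
      DifferentiableAt ℝ (fun x => π x s a) θ' :=
    fun θ' s a => ((hπC1 s a).differentiable one_ne_zero).differentiableAt
  -- nonnegativity and row sums of Pγ
  have hPγ0 : ∀ θ' s s', 0 ≤ Pγ θ' s s' := by
    intro θ' s s'
    rw [hPγ]
    exact mul_nonneg hγ0.le (Finset.sum_nonneg fun a _ =>
      mul_nonneg (hπ0 θ' s a) (hP0 s a s'))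
  have hPγrow : ∀ θ' s, ∑ s', Pγ θ' s s' = γ := by
    intro θ' s
    simp only [hPγ, ← Finset.mul_sum]
    rw [Finset.sum_comm]
    have : ∑ a, ∑ s', π θ' s a * P s a s' = 1 := by
      rw [← hπ1 θ' s]
      exact Finset.sum_congr rfl fun a _ => by
        rw [← Finset.mul_sum, hP1 s a, mul_one]
    rw [this, mul_one]
  -- invertibility of 1 - Pγ
  have hdet : ∀ θ', (1 - Pγ θ').det ≠ 0 := by
    intro θ' hd
    obtain ⟨x, hx0, hx⟩ := (Matrix.exists_mulVec_eq_zero_iff).mpr hd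
    have hxr : ∀ s, x s = ∑ s', Pγ θ' s s' * x s' := by
      intro s
      have h1 := congrFun hx s
      simp only [Matrix.mulVec, dotProduct, Pi.zero_apply] at h1
      rw [hexp] at h1
      linarith
    obtain ⟨s0, -, hs0⟩ := Finset.exists_max_image Finset.univ (fun s => |x s|)
      ⟨Classical.arbitrary S, Finset.mem_univ _⟩
    have hpos : 0 < |x s0| := by
      obtain ⟨s1, hs1⟩ := Function.ne_iff.mp hx0
      exact lt_of_lt_of_le (abs_pos.mpr hs1) (hs0 s1 (Finset.mem_univ _))
    have hle : |x s0| ≤ γ * |x s0| := by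
      calc |x s0| = |∑ s', Pγ θ' s0 s' * x s'| := by rw [← hxr]
        _ ≤ ∑ s', |Pγ θ' s0 s' * x s'| := Finset.abs_sum_le_sum_abs _ _
        _ ≤ ∑ s', Pγ θ' s0 s' * |x s0| := by
            refine Finset.sum_le_sum fun s' _ => ?_
            rw [abs_mul, abs_of_nonneg (hPγ0 θ' s0 s')]
            exact mul_le_mul_of_nonneg_left (hs0 s' (Finset.mem_univ _)) (hPγ0 θ' s0 s')
        _ = γ * |x s0| := by rw [← Finset.sum_mul, hPγrow]
    nlinarith
  have hdetUnit : ∀ θ', IsUnit (1 - Pγ θ').det :=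
    fun θ' => isUnit_iff_ne_zero.mpr (hdet θ')
  -- differentiability of entries of 1 - Pγ
  have hBdiff : ∀ s s', DifferentiableAt ℝ (fun θ' => (1 - Pγ θ') s s') θ := by
    intro s s'
    have heq : (fun θ' => (1 - Pγ θ') s s')
        = fun θ' => (1 : Matrix S S ℝ) s s' - γ * ∑ a, π θ' s a * P s a s' := by
      funext θ'
      rw [Matrix.sub_apply, hPγ]
    rw [heq]
    exact (differentiableAt_const _).sub
      ((DifferentiableAt.fun_sum fun a _ => (hπdiff θ s a).mul_const _).const_mul _)
  -- differentiability of entries of the inverse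
  have hinvdiff : ∀ s s', DifferentiableAt ℝ (fun θ' => (1 - Pγ θ')⁻¹ s s') θ := by
    intro s s'
    have heq : (fun θ' => (1 - Pγ θ')⁻¹ s s')
        = fun θ' => ((1 - Pγ θ').det)⁻¹
            * ((1 - Pγ θ').updateRow s' (Pi.single s 1)).det := by
      funext θ'
      rw [Matrix.inv_def, Matrix.smul_apply, Matrix.adjugate_apply, smul_eq_mul,
        Ring.inverse_eq_inv']
    rw [heq]
    refine DifferentiableAt.mul ?_ ?_
    · exact (aux_det_diff (fun θ' => 1 - Pγ θ') θ hBdiff).inv (hdet θ)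
    · refine aux_det_diff _ θ ?_
      intro i j
      simp only [Matrix.updateRow_apply]
      split_ifs
      · exact differentiableAt_const _
      · exact hBdiff i j
  -- differentiability of v
  have hvdiff : ∀ s, DifferentiableAt ℝ (fun θ' => v θ' s) θ := by
    intro s
    have heq : (fun θ' => v θ' s)
        = fun θ' => ∑ s', (1 - Pγ θ')⁻¹ s s' * (∑ a, π θ' s' a * rbar s' a) := by
      funext θ'
      rw [hv θ']
      simp [Matrix.mulVec, dotProduct]
    rw [heq]
    exact DifferentiableAt.fun_sum fun s' _ => (hinvdiff s s').fun_mul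
      (DifferentiableAt.fun_sum fun a _ => (hπdiff θ s' a).mul_const _)
  -- Bellman equation
  have hBell : ∀ θ' s, v θ' s
      = (∑ a, π θ' s a * rbar s a) + ∑ s', Pγ θ' s s' * v θ' s' := by
    intro θ' s
    have hB : (1 - Pγ θ') *ᵥ v θ' = fun t => ∑ a, π θ' t a * rbar t a := by
      rw [hv θ', Matrix.mulVec_mulVec, Matrix.mul_nonsing_inv _ (hdetUnit θ'),
        Matrix.one_mulVec]
    have h1 := congrFun hB s
    simp only [Matrix.mulVec, dotProduct] at h1
    rw [hexp] at h1
    linarith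
  -- derivatives
  set Dπ : S → A → (EuclideanSpace ℝ (Fin d)) →L[ℝ] ℝ :=
    fun s a => fderiv ℝ (fun θ' => π θ' s a) θ with hDπ
  set Dv : S → (EuclideanSpace ℝ (Fin d)) →L[ℝ] ℝ :=
    fun s => fderiv ℝ (fun θ' => v θ' s) θ with hDv
  have hπfd : ∀ s a, HasFDerivAt (fun θ' => π θ' s a) (Dπ s a) θ :=
    fun s a => (hπdiff θ s a).hasFDerivAt
  have hvfd : ∀ s, HasFDerivAt (fun θ' => v θ' s) (Dv s) θ :=
    fun s => (hvdiff s).hasFDerivAt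
  have hPγfd : ∀ s s',
      HasFDerivAt (fun θ' => Pγ θ' s s') (∑ a, (γ * P s a s') • Dπ s a) θ := by
    intro s s'
    have heq : (fun θ' => Pγ θ' s s') = fun θ' => ∑ a, γ * P s a s' * π θ' s a := by
      funext θ'
      rw [hPγ, Finset.mul_sum]
      exact Finset.sum_congr rfl fun a _ => by ring
    rw [heq]
    exact HasFDerivAt.fun_sum fun a _ => (hπfd s a).const_mul _
  have hrfd : ∀ s, HasFDerivAt (fun θ' => ∑ a, π θ' s a * rbar s a)
      (∑ a, rbar s a • Dπ s a) θ :=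
    fun s => HasFDerivAt.fun_sum fun a _ => (hπfd s a).mul_const _
  -- part 1
  have part1 : ∀ s, Dv s = (∑ a, q θ s a • Dπ s a) + ∑ s', Pγ θ s s' • Dv s' := by
    intro s
    have h1 : HasFDerivAt (fun θ' => (∑ a, π θ' s a * rbar s a)
          + ∑ s', Pγ θ' s s' * v θ' s')
        ((∑ a, rbar s a • Dπ s a) + ∑ s', (Pγ θ s s' • Dv s'
          + v θ s' • (∑ a, (γ * P s a s') • Dπ s a))) θ :=
      (hrfd s).add (HasFDerivAt.fun_sum fun s' _ => (hPγfd s s').fun_mul (hvfd s'))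
    have h2 : (fun θ' => v θ' s) = fun θ' => (∑ a, π θ' s a * rbar s a)
        + ∑ s', Pγ θ' s s' * v θ' s' := funext fun θ' => hBell θ' s
    have hEq : (∑ a, rbar s a • Dπ s a) + ∑ s', (Pγ θ s s' • Dv s'
          + v θ s' • (∑ a, (γ * P s a s') • Dπ s a))
        = (∑ a, q θ s a • Dπ s a) + ∑ s', Pγ θ s s' • Dv s' := by
      rw [Finset.sum_add_distrib]
      have h3 : ∑ s', v θ s' • (∑ a, (γ * P s a s') • Dπ s a)
          = ∑ a, (γ * ∑ s', P s a s' * v θ s') • Dπ s a := by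
        simp only [Finset.smul_sum, smul_smul]
        rw [Finset.sum_comm]
        refine Finset.sum_congr rfl fun a _ => ?_
        rw [← Finset.sum_smul, Finset.mul_sum]
        congr 1
        exact Finset.sum_congr rfl fun s' _ => by ring
      rw [h3]
      have h4 : (∑ a, q θ s a • Dπ s a)
          = (∑ a, rbar s a • Dπ s a) + ∑ a, (γ * ∑ s', P s a s' * v θ s') • Dπ s a := by
        rw [← Finset.sum_add_distrib]
        exact Finset.sum_congr rfl fun a _ => by rw [hq, add_smul]
      rw [h4]
      abel
    have h5 : HasFDerivAt (fun θ' => v θ' s)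
        ((∑ a, q θ s a • Dπ s a) + ∑ s', Pγ θ s s' • Dv s') θ := by
      rw [h2]
      exact hEq ▸ h1
    exact h5.fderiv
  refine ⟨part1, ?_⟩
  -- part 2
  have hcol : ∀ u : EuclideanSpace ℝ (Fin d),
      (fun s => Dv s u) = (1 - Pγ θ)⁻¹ *ᵥ (fun s => (∑ a, q θ s a • Dπ s a) u) := by
    intro u
    have hBx : (1 - Pγ θ) *ᵥ (fun s => Dv s u)
        = fun s => (∑ a, q θ s a • Dπ s a) u := by
      funext s
      have h := congrArg (fun L : (EuclideanSpace ℝ (Fin d)) →L[ℝ] ℝ => L u) (part1 s)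
      simp only [ContinuousLinearMap.add_apply, ContinuousLinearMap.coe_sum',
        Finset.sum_apply, ContinuousLinearMap.coe_smul', Pi.smul_apply,
        smul_eq_mul] at h
      show ∑ x, (1 - Pγ θ) s x * (Dv x) u = (∑ a, q θ s a • Dπ s a) u
      rw [hexp]
      simp only [ContinuousLinearMap.coe_sum', Finset.sum_apply,
        ContinuousLinearMap.coe_smul', Pi.smul_apply, smul_eq_mul]
      linarith
    rw [← hBx, Matrix.mulVec_mulVec, Matrix.nonsing_inv_mul _ (hdetUnit θ),
      Matrix.one_mulVec]
  intro s
  ext u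
  have h := congrFun (hcol u) s
  simp only [Matrix.mulVec, dotProduct] at h
  simpa only [ContinuousLinearMap.coe_sum', Finset.sum_apply,
    ContinuousLinearMap.coe_smul', Pi.smul_apply, smul_eq_mul] using h
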